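/- Let n be a natural number, let μ be a probability measure on EuclideanSpace ℝ (Fin n) with finite first moment (∫ ‖x‖ dμ(x) < ∞), and let σ > 0. Define p(y) = ∫ exp(−‖y − x‖²/(2σ²)) dμ(x) and m(y) = ∫ x · exp(−‖y − x‖²/(2σ²)) dμ(x) (a Bochner integral, which exists). Then for every y: p(y) > 0; p has gradient (m(y) − p(y)·y)/σ² at y; and consequently the function log ∘ p has gradient (m(y)/p(y) − y)/σ² at y. In particular, writing R(y) = m(y)/p(y) for the minimum mean square error denoiser (posterior mean), Tweedie's formula holds: ∇_y log p_σ(y) = (R(y) − y)/σ². -/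

import Mathlib

open MeasureTheory InnerProductSpace

theorem gauss_grad (n : ℕ) (σ : ℝ) (hσ : 0 < σ) (x z : EuclideanSpace ℝ (Fin n)) :
    HasGradientAt (fun w => Real.exp (-‖w - x‖ ^ 2 / (2 * σ ^ 2)))
      (((σ ^ 2)⁻¹ * Real.exp (-‖z - x‖ ^ 2 / (2 * σ ^ 2))) • (x - z)) z := by
  have h1 : HasFDerivAt (fun w : EuclideanSpace ℝ (Fin n) => w - x)
      (ContinuousLinearMap.id ℝ (EuclideanSpace ℝ (Fin n))) z :=
    (hasFDerivAt_id z).sub_const x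
  have h2 := (h1.inner ℝ h1)
  have h4 := (h2.const_mul (-(2 * σ ^ 2)⁻¹)).exp
  rw [hasGradientAt_iff_hasFDerivAt]
  have hfun : (fun w : EuclideanSpace ℝ (Fin n) => Real.exp (-‖w - x‖ ^ 2 / (2 * σ ^ 2)))
      = fun w => Real.exp (-(2 * σ ^ 2)⁻¹ * (inner ℝ (w - x) (w - x) : ℝ)) := by
    funext w
    rw [real_inner_self_eq_norm_sq]
    ring_nf
  rw [hfun]
  refine h4.congr_fderiv ?_
  ext h
  have he : Real.exp (-(2 * σ ^ 2)⁻¹ * (inner ℝ (z - x) (z - x) : ℝ))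
      = Real.exp (-‖z - x‖ ^ 2 / (2 * σ ^ 2)) := by
    rw [real_inner_self_eq_norm_sq]; ring_nf
  simp only [toDual_apply_apply, ContinuousLinearMap.smul_apply, ContinuousLinearMap.comp_apply,
    ContinuousLinearMap.prod_apply, ContinuousLinearMap.id_apply, fderivInnerCLM_apply,
    smul_eq_mul, real_inner_smul_left]
  have hσ2 : (σ:ℝ) ^ 2 ≠ 0 := by positivity
  have h5 : (inner ℝ (z - x) h : ℝ) = -(inner ℝ (x - z) h : ℝ) := by
    rw [← inner_neg_left]; congr 1; abel
  have h6 : (inner ℝ h (z - x) : ℝ) = -(inner ℝ (x - z) h : ℝ) := by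
    rw [real_inner_comm]; exact h5
  rw [he, h6]
  field_simp
  rw [h5]
  ring

theorem gauss_bd (σ : ℝ) (hσ : 0 < σ) (t : ℝ) (ht : 0 ≤ t) :
    t * Real.exp (-t ^ 2 / (2 * σ ^ 2)) ≤ 2 * σ := by
  rcases le_or_gt t σ with h | h
  · have he : Real.exp (-t ^ 2 / (2 * σ ^ 2)) ≤ 1 := by
      rw [Real.exp_le_one_iff]
      apply div_nonpos_of_nonpos_of_nonneg
      · simp [sq_nonneg]
      · positivity
    nlinarith [Real.exp_pos (-t ^ 2 / (2 * σ ^ 2))]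
  · have hu : 0 < t ^ 2 / (2 * σ ^ 2) := by
      have : 0 < t := lt_trans hσ h
      positivity
    have h1 : Real.exp (-t ^ 2 / (2 * σ ^ 2)) ≤ (t ^ 2 / (2 * σ ^ 2))⁻¹ := by
      rw [neg_div, Real.exp_neg]
      apply inv_anti₀ hu
      linarith [Real.add_one_le_exp (t ^ 2 / (2 * σ ^ 2))]
    have h2 : (t ^ 2 / (2 * σ ^ 2))⁻¹ = 2 * σ ^ 2 / t ^ 2 := by
      rw [inv_div]
    rw [h2] at h1
    have ht0 : 0 < t := lt_trans hσ h
    have := mul_le_mul_of_nonneg_left h1 ht0.le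
    calc t * Real.exp (-t ^ 2 / (2 * σ ^ 2)) ≤ t * (2 * σ ^ 2 / t ^ 2) := this
      _ = 2 * σ ^ 2 / t := by field_simp
      _ ≤ 2 * σ := by
          rw [div_le_iff₀ ht0]
          nlinarith

/-- Tweedie's formula: let `μ` be a probability measure on `ℝⁿ` with finite first
moment and `σ > 0`. With `p(y) = ∫ exp(−‖y − x‖²/(2σ²)) dμ(x)` (the unnormalized density
of `x + N(0, σ² Id)` noise) and `m(y) = ∫ exp(−‖y − x‖²/(2σ²)) • x dμ(x)`, for every `y`
we have `p(y) > 0`, `p` has gradient `(m(y) − p(y)·y)/σ²` at `y`, and `log ∘ p` has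
gradient `(m(y)/p(y) − y)/σ² = (R(y) − y)/σ²` at `y`, where `R(y) = m(y)/p(y)` is the
MMSE denoiser (posterior mean). -/
theorem tweedie_formula
    (n : ℕ) (μ : Measure (EuclideanSpace ℝ (Fin n))) [IsProbabilityMeasure μ]
    (hmom : Integrable (fun x : EuclideanSpace ℝ (Fin n) => ‖x‖) μ)
    (σ : ℝ) (hσ : 0 < σ)
    (p : EuclideanSpace ℝ (Fin n) → ℝ)
    (hp : ∀ y, p y = ∫ x, Real.exp (-‖y - x‖ ^ 2 / (2 * σ ^ 2)) ∂μ)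
    (m : EuclideanSpace ℝ (Fin n) → EuclideanSpace ℝ (Fin n))
    (hm : ∀ y, m y = ∫ x, Real.exp (-‖y - x‖ ^ 2 / (2 * σ ^ 2)) • x ∂μ) :
    ∀ y : EuclideanSpace ℝ (Fin n),
      0 < p y ∧
      HasGradientAt p ((σ ^ 2)⁻¹ • (m y - p y • y)) y ∧
      HasGradientAt (fun z => Real.log (p z)) ((σ ^ 2)⁻¹ • ((p y)⁻¹ • m y - y)) y := by
  intro y
  have hσ2 : (0:ℝ) < σ ^ 2 := by positivity
  have hcont : ∀ z : EuclideanSpace ℝ (Fin n),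
      Continuous (fun x => Real.exp (-‖z - x‖ ^ 2 / (2 * σ ^ 2))) := by
    intro z; fun_prop
  have hfpos : ∀ (z x : EuclideanSpace ℝ (Fin n)),
      0 < Real.exp (-‖z - x‖ ^ 2 / (2 * σ ^ 2)) := fun z x => Real.exp_pos _
  have hfle : ∀ (z x : EuclideanSpace ℝ (Fin n)),
      Real.exp (-‖z - x‖ ^ 2 / (2 * σ ^ 2)) ≤ 1 := by
    intro z x
    rw [Real.exp_le_one_iff]
    apply div_nonpos_of_nonpos_of_nonneg
    · simp [sq_nonneg]
    · positivity
  have hfint : ∀ z : EuclideanSpace ℝ (Fin n),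
      Integrable (fun x => Real.exp (-‖z - x‖ ^ 2 / (2 * σ ^ 2))) μ := by
    intro z
    refine Integrable.mono' (integrable_const 1) ((hcont z).aestronglyMeasurable) ?_
    filter_upwards with x
    rw [Real.norm_eq_abs, abs_of_pos (hfpos z x)]
    exact hfle z x
  -- positivity of p
  have hppos : 0 < p y := by
    rw [hp y]
    rw [integral_pos_iff_support_of_nonneg (fun x => (hfpos y x).le) (hfint y)]
    have hs : (Function.support fun x => Real.exp (-‖y - x‖ ^ 2 / (2 * σ ^ 2))) = Set.univ :=
      Set.eq_univ_of_forall fun x => (hfpos y x).ne'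
    rw [hs]
    simp
  -- integrability facts
  have hix : Integrable (fun x => Real.exp (-‖y - x‖ ^ 2 / (2 * σ ^ 2)) • x) μ := by
    refine Integrable.mono' hmom ?_ ?_
    · exact (((hcont y).smul continuous_id).aestronglyMeasurable)
    · filter_upwards with x
      rw [norm_smul, Real.norm_eq_abs, abs_of_pos (hfpos y x)]
      calc Real.exp (-‖y - x‖ ^ 2 / (2 * σ ^ 2)) * ‖x‖ ≤ 1 * ‖x‖ := by
            apply mul_le_mul_of_nonneg_right (hfle y x) (norm_nonneg x)
        _ = ‖x‖ := one_mul _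
  have hiy : Integrable (fun x => Real.exp (-‖y - x‖ ^ 2 / (2 * σ ^ 2)) • y) μ :=
    (hfint y).smul_const y
  have hg : Integrable (fun x => Real.exp (-‖y - x‖ ^ 2 / (2 * σ ^ 2)) • (x - y)) μ := by
    have := hix.sub hiy
    refine this.congr ?_
    filter_upwards with x
    simp [smul_sub]
  -- the differentiation under the integral sign
  have key : HasFDerivAt (fun z => ∫ x, Real.exp (-‖z - x‖ ^ 2 / (2 * σ ^ 2)) ∂μ)
      (∫ x, (toDual ℝ (EuclideanSpace ℝ (Fin n)))
        (((σ ^ 2)⁻¹ * Real.exp (-‖y - x‖ ^ 2 / (2 * σ ^ 2))) • (x - y)) ∂μ) y := by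
    refine hasFDerivAt_integral_of_dominated_of_fderiv_le (𝕜 := ℝ)
      (F' := fun z x => (toDual ℝ (EuclideanSpace ℝ (Fin n)))
        (((σ ^ 2)⁻¹ * Real.exp (-‖z - x‖ ^ 2 / (2 * σ ^ 2))) • (x - z)))
      (bound := fun _ => 2 / σ) (Metric.ball_mem_nhds y one_pos) ?_ ?_ ?_ ?_ ?_ ?_
    · filter_upwards with z
      exact (hcont z).aestronglyMeasurable
    · exact hfint y
    · apply Continuous.aestronglyMeasurable
      apply (toDual ℝ (EuclideanSpace ℝ (Fin n))).continuous.comp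
      fun_prop
    · filter_upwards with x
      intro z _
      rw [LinearIsometryEquiv.norm_map, norm_smul, Real.norm_eq_abs,
        abs_of_pos (by positivity : (0:ℝ) < (σ ^ 2)⁻¹ * Real.exp (-‖z - x‖ ^ 2 / (2 * σ ^ 2)))]
      have : ‖x - z‖ = ‖z - x‖ := norm_sub_rev x z
      rw [this]
      have hb := gauss_bd σ hσ ‖z - x‖ (norm_nonneg _)
      rw [mul_assoc, mul_comm (Real.exp _) ‖z - x‖]
      calc (σ ^ 2)⁻¹ * (‖z - x‖ * Real.exp (-‖z - x‖ ^ 2 / (2 * σ ^ 2)))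
          ≤ (σ ^ 2)⁻¹ * (2 * σ) := by
            apply mul_le_mul_of_nonneg_left hb (by positivity)
        _ = 2 / σ := by field_simp
    · exact integrable_const _
    · filter_upwards with x
      intro z _
      exact (gauss_grad n σ hσ x z).hasFDerivAt
  -- rewrite the integral of the derivative
  have hswap : (∫ x, (toDual ℝ (EuclideanSpace ℝ (Fin n)))
        (((σ ^ 2)⁻¹ * Real.exp (-‖y - x‖ ^ 2 / (2 * σ ^ 2))) • (x - y)) ∂μ)
      = (toDual ℝ (EuclideanSpace ℝ (Fin n)))
        (∫ x, ((σ ^ 2)⁻¹ * Real.exp (-‖y - x‖ ^ 2 / (2 * σ ^ 2))) • (x - y) ∂μ) :=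
    (toDual ℝ (EuclideanSpace ℝ (Fin n))).toLinearIsometry.integral_comp_comm _
  have hval : (∫ x, ((σ ^ 2)⁻¹ * Real.exp (-‖y - x‖ ^ 2 / (2 * σ ^ 2))) • (x - y) ∂μ)
      = (σ ^ 2)⁻¹ • (m y - p y • y) := by
    have e1 : (fun x => ((σ ^ 2)⁻¹ * Real.exp (-‖y - x‖ ^ 2 / (2 * σ ^ 2))) • (x - y))
        = fun x => (σ ^ 2)⁻¹ • (Real.exp (-‖y - x‖ ^ 2 / (2 * σ ^ 2)) • (x - y)) := by
      funext x; rw [smul_smul]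
    rw [e1, integral_smul]
    congr 1
    have e2 : (fun x => Real.exp (-‖y - x‖ ^ 2 / (2 * σ ^ 2)) • (x - y))
        = fun x => Real.exp (-‖y - x‖ ^ 2 / (2 * σ ^ 2)) • x
          - Real.exp (-‖y - x‖ ^ 2 / (2 * σ ^ 2)) • y := by
      funext x; rw [smul_sub]
    rw [e2, integral_sub hix hiy, integral_smul_const, ← hm y, ← hp y]
  have hpfun : p = fun z => ∫ x, Real.exp (-‖z - x‖ ^ 2 / (2 * σ ^ 2)) ∂μ := funext hp
  have hgrad : HasGradientAt p ((σ ^ 2)⁻¹ • (m y - p y • y)) y := by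
    rw [hasGradientAt_iff_hasFDerivAt]
    rw [hswap, hval] at key
    exact key.congr_of_eventuallyEq (Filter.Eventually.of_forall hp)
  refine ⟨hppos, hgrad, ?_⟩
  -- log part
  have hlog := (Real.hasDerivAt_log hppos.ne').comp_hasFDerivAt y hgrad.hasFDerivAt
  rw [hasGradientAt_iff_hasFDerivAt]
  have hsm : (p y)⁻¹ • ((toDual ℝ (EuclideanSpace ℝ (Fin n)))
        ((σ ^ 2)⁻¹ • (m y - p y • y)))
      = (toDual ℝ (EuclideanSpace ℝ (Fin n))) ((σ ^ 2)⁻¹ • ((p y)⁻¹ • m y - y)) := by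
    rw [← _root_.map_smul]
    congr 1
    rw [smul_comm]
    congr 1
    rw [smul_sub, smul_smul, inv_mul_cancel₀ hppos.ne', one_smul]
  rw [← hsm]
  exact hlog
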